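/- Let A, B be n×n complex matrices with −B†A + A†B = 0 and A†A + B†B > 0, and suppose B − ikA is invertible for a given nonzero real k. Then the matrix S₀(k) := −(B + ikA)(B − ikA)^{-1} is unitary and satisfies S₀(−k) = S₀(k)† = S₀(k)^{-1}. -/
import Mathlib


open Matrix
open scoped ComplexOrder

theorem free_scattering_matrix_unitary (n : ℕ) (A B : Matrix (Fin n) (Fin n) ℂ)
    (h1 : -Bᴴ * A + Aᴴ * B = 0) (h2 : (Aᴴ * A + Bᴴ * B).PosDef)
    (k : ℝ) (hk : k ≠ 0) (hinv : IsUnit (B - (Complex.I * k) • A)) :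
    (-(B + (Complex.I * k) • A) * (B - (Complex.I * k) • A)⁻¹) ∈
      Matrix.unitaryGroup (Fin n) ℂ ∧
    -(B + (Complex.I * (-k : ℝ)) • A) * (B - (Complex.I * (-k : ℝ)) • A)⁻¹ =
      (-(B + (Complex.I * k) • A) * (B - (Complex.I * k) • A)⁻¹)ᴴ ∧
    (-(B + (Complex.I * k) • A) * (B - (Complex.I * k) • A)⁻¹)ᴴ =
      (-(B + (Complex.I * k) • A) * (B - (Complex.I * k) • A)⁻¹)⁻¹ := by
  set c : ℂ := Complex.I * k with hc
  have hAB : Bᴴ * A = Aᴴ * B := by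
    have := h1
    rwa [neg_mul, neg_add_eq_zero] at this
  have hstarc : star c = -c := by
    simp [hc, Complex.ext_iff]
  set C := B - c • A with hC
  set D := B + c • A with hD
  -- key identity
  have key : Dᴴ * D = Cᴴ * C := by
    simp only [hC, hD, conjTranspose_add, conjTranspose_sub, conjTranspose_smul, hstarc,
      neg_smul, add_mul, sub_mul, mul_add, mul_sub, smul_mul_assoc, mul_smul_comm, smul_smul,
      neg_mul, neg_neg, smul_neg, sub_neg_eq_add, smul_add, smul_sub]
    rw [hAB]
    abel
  have hCdet : IsUnit C.det := (isUnit_iff_isUnit_det _).mp hinv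
  have hCinv : C * C⁻¹ = 1 := mul_nonsing_inv _ hCdet
  have hCinv' : C⁻¹ * C = 1 := nonsing_inv_mul _ hCdet
  have hCne : C.det ≠ 0 := hCdet.ne_zero
  have hDdet : IsUnit D.det := by
    have hdet : star D.det * D.det = star C.det * C.det := by
      have := congrArg Matrix.det key
      simpa [det_mul, det_conjTranspose] using this
    have hne : star C.det * C.det ≠ 0 := mul_ne_zero (star_ne_zero.mpr hCne) hCne
    rw [← hdet] at hne
    exact isUnit_iff_ne_zero.mpr (right_ne_zero_of_mul hne)
  have hDinv : D * D⁻¹ = 1 := mul_nonsing_inv _ hDdet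
  have hCHC : C⁻¹ᴴ * Cᴴ = 1 := by
    rw [← conjTranspose_mul, hCinv, conjTranspose_one]
  -- unitarity: star S * S = 1
  have hS : (-D * C⁻¹)ᴴ * (-D * C⁻¹) = 1 := by
    have expand : (-D * C⁻¹)ᴴ * (-D * C⁻¹) = C⁻¹ᴴ * (Dᴴ * D) * C⁻¹ := by
      simp only [conjTranspose_mul, conjTranspose_neg, Matrix.neg_mul, Matrix.mul_neg, neg_neg]
      rw [Matrix.mul_assoc, Matrix.mul_assoc, Matrix.mul_assoc]
    rw [expand, key, ← Matrix.mul_assoc, hCHC, one_mul, hCinv]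
  have hmem : (-D * C⁻¹) ∈ Matrix.unitaryGroup (Fin n) ℂ :=
    mem_unitaryGroup_iff'.mpr hS
  refine ⟨hmem, ?_, ?_⟩
  · -- S(-k) = Sᴴ
    have hcast : (Complex.I * ((-k : ℝ) : ℂ)) = -c := by
      push_cast [hc]; ring
    have e1 : B + (Complex.I * ((-k : ℝ) : ℂ)) • A = C := by
      rw [hcast, hC, neg_smul, ← sub_eq_add_neg]
    have e2 : B - (Complex.I * ((-k : ℝ) : ℂ)) • A = D := by
      rw [hcast, hD, neg_smul, sub_neg_eq_add]
    rw [e1, e2]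
    -- goal: -C * D⁻¹ = (-D * C⁻¹)ᴴ
    have hCHdet : IsUnit Cᴴ.det := by
      rw [det_conjTranspose]
      exact isUnit_iff_ne_zero.mpr (star_ne_zero.mpr hCne)
    have main : C * D⁻¹ = Cᴴ⁻¹ * Dᴴ := by
      calc C * D⁻¹ = Cᴴ⁻¹ * Cᴴ * C * D⁻¹ := by
            rw [nonsing_inv_mul _ hCHdet, one_mul]
        _ = Cᴴ⁻¹ * (Cᴴ * C) * D⁻¹ := by rw [Matrix.mul_assoc Cᴴ⁻¹]
        _ = Cᴴ⁻¹ * (Dᴴ * D) * D⁻¹ := by rw [key]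
        _ = Cᴴ⁻¹ * Dᴴ * (D * D⁻¹) := by rw [Matrix.mul_assoc, Matrix.mul_assoc, Matrix.mul_assoc]
        _ = Cᴴ⁻¹ * Dᴴ := by rw [hDinv, Matrix.mul_one]
    rw [conjTranspose_mul, conjTranspose_neg, conjTranspose_nonsing_inv, Matrix.mul_neg,
      ← main, Matrix.neg_mul]
  · exact (inv_eq_left_inv hS).symm
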